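/- arXiv:2004.05528 — 3 statements merged into one kernel-verified Lean document; each statement's English description precedes it below -/
import Mathlib

section
/- Let λ₁, …, λₙ ∈ (-1,1), n ≥ 2, and let M be the n×n matrix with M_{ij} = 1/(1-λᵢλⱼ). Then det M = (1/(1-λ₁²)) · ∏_{i=2}^{n} ((λᵢ-λ₁)/(1-λᵢλ₁))² · det M', where M' is the (n-1)×(n-1) matrix with entries M'_{ij} = 1/(1-λᵢλⱼ) for i,j ∈ {2,…,n}. -/
def finOneSumEquiv (n : ℕ) : Fin 1 ⊕ Fin n ≃ Fin (n + 1) where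
  toFun := Sum.elim (fun _ => (0 : Fin (n + 1))) Fin.succ
  invFun := Fin.cases (Sum.inl 0) Sum.inr
  left_inv x := by
    rcases x with x | x
    · simp [Subsingleton.elim x 0]
    · simp
  right_inv i := by induction i using Fin.cases <;> simp

theorem stmt_5 (n : ℕ) (l : Fin (n + 1) → ℝ) (hl : ∀ i, l i ∈ Set.Ioo (-1 : ℝ) 1) :
    Matrix.det (Matrix.of fun i j : Fin (n + 1) => 1 / (1 - l i * l j)) =
      (1 / (1 - l 0 ^ 2)) * (∏ i : Fin n, ((l i.succ - l 0) / (1 - l i.succ * l 0)) ^ 2) *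
        Matrix.det (Matrix.of fun i j : Fin n => 1 / (1 - l i.succ * l j.succ)) := by
  have habs : ∀ i, |l i| < 1 := fun i => abs_lt.mpr ⟨(hl i).1, (hl i).2⟩
  have hne : ∀ i j, (1 - l i * l j) ≠ 0 := by
    intro i j
    have h1 : |l i * l j| < 1 := by
      rw [abs_mul]
      nlinarith [abs_nonneg (l i), abs_nonneg (l j), habs i, habs j]
    have := (abs_lt.mp h1).2
    nlinarith
  set a := l 0 with ha
  have hne1 : ∀ i, (1 - l i * a) ≠ 0 := fun i => by rw [ha]; exact hne i 0
  have hne2 : ∀ j, (1 - a * l j) ≠ 0 := fun j => by rw [ha]; exact hne 0 j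
  have hne0 : (1 - a * a) ≠ 0 := by rw [ha]; exact hne 0 0
  set A : Matrix (Fin 1) (Fin 1) ℝ := Matrix.of fun _ _ => 1 / (1 - a * a) with hA
  set B : Matrix (Fin 1) (Fin n) ℝ := Matrix.of fun _ j => 1 / (1 - a * l j.succ) with hB
  set C : Matrix (Fin n) (Fin 1) ℝ := Matrix.of fun i _ => 1 / (1 - l i.succ * a) with hC
  set D : Matrix (Fin n) (Fin n) ℝ := Matrix.of fun i j => 1 / (1 - l i.succ * l j.succ) with hD
  set c : Fin n → ℝ := fun i => (l i.succ - a) / (1 - l i.succ * a) with hc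
  have mul1 : A * Matrix.of (fun _ _ => 1 - a * a) = 1 := by
    ext i j
    simp only [Matrix.mul_apply, Fin.sum_univ_one, hA, Matrix.of_apply,
      Matrix.one_apply, Subsingleton.elim i j, if_pos rfl]
    rw [if_pos trivial]; exact one_div_mul_cancel hne0
  have mul2 : Matrix.of (fun _ _ => 1 - a * a) * A = 1 := by
    ext i j
    simp only [Matrix.mul_apply, Fin.sum_univ_one, hA, Matrix.of_apply,
      Matrix.one_apply, Subsingleton.elim i j, if_pos rfl]
    rw [if_pos trivial]; exact mul_one_div_cancel hne0
  letI instA : Invertible A := ⟨Matrix.of fun _ _ => 1 - a * a, mul2, mul1⟩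
  have hinvA : ⅟A = Matrix.of fun _ _ => 1 - a * a := rfl
  have hsub : (Matrix.of fun i j : Fin (n + 1) => 1 / (1 - l i * l j)).submatrix
      (finOneSumEquiv n) (finOneSumEquiv n) = Matrix.fromBlocks A B C D := by
    ext i j
    rcases i with i | i <;> rcases j with j | j <;>
      simp [finOneSumEquiv, hA, hB, hC, hD, Matrix.fromBlocks, ha]
  have hS : D - C * ⅟A * B = Matrix.diagonal c * D * Matrix.diagonal c := by
    ext i j
    rw [Matrix.mul_diagonal, Matrix.diagonal_mul]
    simp only [Matrix.sub_apply, Matrix.mul_apply, Fin.sum_univ_one, hinvA,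
      Matrix.of_apply, hB, hC, hD, hc]
    field_simp [hne1 i.succ, hne1 j.succ, hne2 j.succ, hne i.succ j.succ]
    ring
  rw [← Matrix.det_submatrix_equiv_self (finOneSumEquiv n), hsub,
    Matrix.det_fromBlocks₁₁, hS, Matrix.det_mul, Matrix.det_mul,
    Matrix.det_diagonal, Matrix.det_fin_one]
  have h2 : (∏ i : Fin n, ((l i.succ - a) / (1 - l i.succ * a)) ^ 2) =
      (∏ i : Fin n, c i) * (∏ i : Fin n, c i) := by
    rw [← Finset.prod_mul_distrib]
    exact Finset.prod_congr rfl fun i _ => pow_two _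
  rw [h2]
  simp only [hA, Matrix.of_apply]
  rw [show (1 : ℝ) - a ^ 2 = 1 - a * a from by ring]
  ring
end

section
/- Let A ∈ ℝ^{n×n} have n distinct real eigenvalues λ₁,…,λₙ ∈ (-1,1) with diagonalization A = P diag(λ₁,…,λₙ) P⁻¹, and let qᵢ denote the i-th row of P⁻¹ (a left eigenvector). Then for B ∈ ℝ^{n×1}, det(G_∞) = (det P)² · [∏_{1≤i<j≤n} ((λⱼ-λᵢ)/(1-λᵢλⱼ))²] · ∏_{i=1}^{n} (qᵢB)²/(1-λᵢ²). -/
open Matrix Finset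

lemma cauchy_det (n : ℕ) (x y : Fin n → ℝ) (h : ∀ i j, (1 : ℝ) - x i * y j ≠ 0) :
    (Matrix.of fun i j => ((1 : ℝ) - x i * y j)⁻¹).det =
      (∏ i : Fin n, ∏ j ∈ Finset.Ioi i, ((x j - x i) * (y j - y i))) /
        ∏ i : Fin n, ∏ j : Fin n, (1 - x i * y j) := by
  induction n with
  | zero => simp
  | succ n ih =>
    set M : Matrix (Fin (n+1)) (Fin (n+1)) ℝ :=
      Matrix.of fun i j => ((1 : ℝ) - x i * y j)⁻¹ with hM
    let e : Fin 1 ⊕ Fin n ≃ Fin (n+1) := finSumFinEquiv.trans (finCongr (Nat.add_comm 1 n))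
    have h1 : ∀ i : Fin 1, e (Sum.inl i) = 0 := by
      intro i; fin_cases i; ext; simp [e, finSumFinEquiv]
    have h2 : ∀ j : Fin n, e (Sum.inr j) = j.succ := by
      intro j; ext; simp [e, finSumFinEquiv, Nat.add_comm]
    set A : Matrix (Fin 1) (Fin 1) ℝ := Matrix.of fun _ _ => ((1:ℝ) - x 0 * y 0)⁻¹ with hA
    set Bm : Matrix (Fin 1) (Fin n) ℝ := Matrix.of fun _ j => ((1:ℝ) - x 0 * y j.succ)⁻¹ with hB
    set Cm : Matrix (Fin n) (Fin 1) ℝ := Matrix.of fun i _ => ((1:ℝ) - x i.succ * y 0)⁻¹ with hC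
    set D : Matrix (Fin n) (Fin n) ℝ :=
      Matrix.of fun i j => ((1:ℝ) - x i.succ * y j.succ)⁻¹ with hD
    have hsub : M.submatrix e e = fromBlocks A Bm Cm D := by
      ext i j
      rcases i with i | i <;> rcases j with j | j <;>
        simp [Matrix.submatrix_apply, h1, h2, fromBlocks, hM, hA, hB, hC, hD]
    have hdetM : M.det = (fromBlocks A Bm Cm D).det := by
      rw [← Matrix.det_submatrix_equiv_self e M, hsub]
    haveI : Invertible A := by
      apply Matrix.invertibleOfIsUnitDet
      rw [Matrix.det_fin_one]
      exact isUnit_iff_ne_zero.2 (inv_ne_zero (h 0 0))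
    have hinvA : ⅟A = Matrix.of fun _ _ => ((1:ℝ) - x 0 * y 0) := by
      apply invOf_eq_right_inv
      ext i j
      fin_cases i; fin_cases j
      simp [hA, Matrix.mul_apply, inv_mul_cancel₀ (h 0 0)]
    set d1 : Fin n → ℝ := fun i => (x i.succ - x 0) / (1 - x i.succ * y 0) with hd1
    set d2 : Fin n → ℝ := fun j => (y j.succ - y 0) / (1 - x 0 * y j.succ) with hd2
    set K : Matrix (Fin n) (Fin n) ℝ :=
      Matrix.of fun i j => ((1:ℝ) - x i.succ * y j.succ)⁻¹ with hK
    have hschur : D - Cm * ⅟A * Bm = Matrix.diagonal d1 * K * Matrix.diagonal d2 := by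
      ext i j
      rw [Matrix.mul_diagonal, Matrix.diagonal_mul]
      simp only [Matrix.sub_apply, hinvA, Matrix.mul_apply, Fin.sum_univ_one, hD, hC, hB, hK,
        Matrix.of_apply, hd1, hd2]
      have hij := h i.succ j.succ
      have hi0 := h i.succ 0
      have h0j := h 0 j.succ
      have h0j' : (1:ℝ) - y j.succ * x 0 ≠ 0 := by rw [mul_comm]; exact h0j
      field_simp
      ring
    have hdet2 : M.det = ((1:ℝ) - x 0 * y 0)⁻¹ *
        ((∏ i, d1 i) * K.det * ∏ j, d2 j) := by
      rw [hdetM, Matrix.det_fromBlocks₁₁, hschur, Matrix.det_mul, Matrix.det_mul,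
        Matrix.det_diagonal, Matrix.det_diagonal, Matrix.det_fin_one]
      simp only [hA, Matrix.of_apply]
    have hKdet : K.det = (∏ i : Fin n, ∏ j ∈ Finset.Ioi i,
          ((x j.succ - x i.succ) * (y j.succ - y i.succ))) /
        ∏ i : Fin n, ∏ j : Fin n, (1 - x i.succ * y j.succ) :=
      ih (fun i => x i.succ) (fun i => y i.succ) (fun i j => h i.succ j.succ)
    rw [hdet2, hKdet]
    have hN : (∏ i : Fin (n+1), ∏ j ∈ Finset.Ioi i, ((x j - x i) * (y j - y i))) =
        ((∏ i : Fin n, (x i.succ - x 0)) * ∏ i : Fin n, (y i.succ - y 0)) *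
          ∏ i : Fin n, ∏ j ∈ Finset.Ioi i,
            ((x j.succ - x i.succ) * (y j.succ - y i.succ)) := by
      rw [Fin.prod_univ_succ]
      simp only [Fin.prod_Ioi_zero, Fin.prod_Ioi_succ, Finset.prod_mul_distrib]
    have hDhat : (∏ i : Fin (n+1), ∏ j : Fin (n+1), (1 - x i * y j)) =
        ((1 - x 0 * y 0) * ∏ j : Fin n, (1 - x 0 * y j.succ)) *
          ((∏ i : Fin n, (1 - x i.succ * y 0)) *
            ∏ i : Fin n, ∏ j : Fin n, (1 - x i.succ * y j.succ)) := by
      rw [Fin.prod_univ_succ, Fin.prod_univ_succ]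
      congr 1
      rw [← Finset.prod_mul_distrib]
      exact Finset.prod_congr rfl fun i _ => Fin.prod_univ_succ _
    have hd1p : (∏ i, d1 i) =
        (∏ i : Fin n, (x i.succ - x 0)) / ∏ i : Fin n, (1 - x i.succ * y 0) :=
      Finset.prod_div_distrib _ _
    have hd2p : (∏ j, d2 j) =
        (∏ j : Fin n, (y j.succ - y 0)) / ∏ j : Fin n, (1 - x 0 * y j.succ) :=
      Finset.prod_div_distrib _ _
    rw [hN, hDhat, hd1p, hd2p]
    have hx0 : ((1:ℝ) - x 0 * y 0) ≠ 0 := h 0 0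
    have hq : (∏ i : Fin n, ((1:ℝ) - x i.succ * y 0)) ≠ 0 :=
      Finset.prod_ne_zero_iff.2 fun i _ => h i.succ 0
    have hs : (∏ j : Fin n, ((1:ℝ) - x 0 * y j.succ)) ≠ 0 :=
      Finset.prod_ne_zero_iff.2 fun j _ => h 0 j.succ
    have hDn : (∏ i : Fin n, ∏ j : Fin n, ((1:ℝ) - x i.succ * y j.succ)) ≠ 0 :=
      Finset.prod_ne_zero_iff.2 fun i _ => Finset.prod_ne_zero_iff.2 fun j _ => h i.succ j.succ
    field_simp

open Matrix in
theorem stmt_10 (n : ℕ) (A P : Matrix (Fin n) (Fin n) ℝ) (hP : IsUnit P.det)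
    (l : Fin n → ℝ) (hl : ∀ i, l i ∈ Set.Ioo (-1 : ℝ) 1) (hinj : Function.Injective l)
    (hdiag : A = P * Matrix.diagonal l * P⁻¹)
    (B : Matrix (Fin n) (Fin 1) ℝ)
    (G : Matrix (Fin n) (Fin n) ℝ)
    (hG : ∀ i j, Filter.Tendsto
      (fun N : ℕ => (∑ k ∈ Finset.range N, A ^ k * B * (A ^ k * B)ᵀ) i j)
      Filter.atTop (nhds (G i j))) :
    G.det = P.det ^ 2 *
      (∏ i : Fin n, ∏ j ∈ Finset.Ioi i, ((l j - l i) / (1 - l i * l j)) ^ 2) *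
        ∏ i : Fin n, (∑ k : Fin n, P⁻¹ i k * B k 0) ^ 2 / (1 - l i ^ 2) := by
  have habs : ∀ i, |l i| < 1 := fun i => abs_lt.2 ⟨(hl i).1, (hl i).2⟩
  have hlt : ∀ a b, |l a * l b| < 1 := by
    intro a b
    rw [abs_mul]
    calc |l a| * |l b| ≤ |l a| * 1 := by
          exact mul_le_mul_of_nonneg_left (habs b).le (abs_nonneg _)
      _ = |l a| := mul_one _
      _ < 1 := habs a
  have hne : ∀ a b, (1 : ℝ) - l a * l b ≠ 0 := by
    intro a b
    have : l a * l b < 1 := lt_of_le_of_lt (le_abs_self _) (hlt a b)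
    linarith
  set q : Fin n → ℝ := fun a => (P⁻¹ * B) a 0 with hq
  -- powers of A
  have hpow : ∀ k : ℕ, A ^ k = P * Matrix.diagonal (fun a => l a ^ k) * P⁻¹ := by
    intro k
    induction k with
    | zero =>
      simp only [pow_zero]
      have h1 : Matrix.diagonal (fun _ : Fin n => (1:ℝ)) = (1 : Matrix (Fin n) (Fin n) ℝ) :=
        Matrix.diagonal_one
      rw [h1, Matrix.mul_one, Matrix.mul_nonsing_inv P hP]
    | succ k ihk =>
      rw [pow_succ, ihk, hdiag]
      have h2 : Matrix.diagonal (fun a => l a ^ k) * Matrix.diagonal l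
          = Matrix.diagonal (fun a => l a ^ (k+1)) := by
        rw [Matrix.diagonal_mul_diagonal]
        congr 1
      calc P * Matrix.diagonal (fun a => l a ^ k) * P⁻¹ * (P * Matrix.diagonal l * P⁻¹)
          = P * Matrix.diagonal (fun a => l a ^ k) * ((P⁻¹ * P) * (Matrix.diagonal l * P⁻¹)) := by
            simp only [Matrix.mul_assoc]
        _ = P * (Matrix.diagonal (fun a => l a ^ k) * Matrix.diagonal l) * P⁻¹ := by
            rw [Matrix.nonsing_inv_mul P hP, Matrix.one_mul]
            simp only [Matrix.mul_assoc]
        _ = P * Matrix.diagonal (fun a => l a ^ (k+1)) * P⁻¹ := by rw [h2]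
  have hAB : ∀ (k : ℕ) (i : Fin n), (A ^ k * B) i 0 = ∑ a, P i a * l a ^ k * q a := by
    intro k i
    rw [hpow k, Matrix.mul_assoc, Matrix.mul_assoc, Matrix.mul_apply]
    refine Finset.sum_congr rfl fun a _ => ?_
    rw [Matrix.diagonal_mul, mul_assoc]
  set K : Matrix (Fin n) (Fin n) ℝ := Matrix.of fun a b => ((1:ℝ) - l a * l b)⁻¹ with hK
  set C : Matrix (Fin n) (Fin n) ℝ :=
    Matrix.of fun a b => q a * ((1:ℝ) - l a * l b)⁻¹ * q b with hC
  have hS : ∀ (N : ℕ) (i j : Fin n), (∑ k ∈ Finset.range N, A ^ k * B * (A ^ k * B)ᵀ) i j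
      = ∑ a, ∑ b, (P i a * q a * (P j b * q b)) * ∑ k ∈ Finset.range N, (l a * l b) ^ k := by
    intro N i j
    rw [Matrix.sum_apply]
    have hterm : ∀ k : ℕ, (A ^ k * B * (A ^ k * B)ᵀ) i j
        = ∑ a, ∑ b, (P i a * q a * (P j b * q b)) * (l a * l b) ^ k := by
      intro k
      rw [Matrix.mul_apply, Fin.sum_univ_one, Matrix.transpose_apply, hAB, hAB,
        Finset.sum_mul_sum]
      refine Finset.sum_congr rfl fun a _ => Finset.sum_congr rfl fun b _ => ?_
      rw [mul_pow]
      ring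
    rw [Finset.sum_congr rfl fun k _ => hterm k, Finset.sum_comm]
    refine Finset.sum_congr rfl fun a _ => ?_
    rw [Finset.sum_comm]
    refine Finset.sum_congr rfl fun b _ => ?_
    rw [← Finset.mul_sum]
  have hGij : ∀ i j, G i j
      = ∑ a, ∑ b, (P i a * q a * (P j b * q b)) * ((1:ℝ) - l a * l b)⁻¹ := by
    intro i j
    refine tendsto_nhds_unique (hG i j) ?_
    have ht : Filter.Tendsto
        (fun N : ℕ => ∑ a, ∑ b, (P i a * q a * (P j b * q b)) *
          ∑ k ∈ Finset.range N, (l a * l b) ^ k)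
        Filter.atTop
        (nhds (∑ a, ∑ b, (P i a * q a * (P j b * q b)) * ((1:ℝ) - l a * l b)⁻¹)) := by
      refine tendsto_finset_sum _ fun a _ => tendsto_finset_sum _ fun b _ => ?_
      exact ((hasSum_geometric_of_norm_lt_one
        (by rw [Real.norm_eq_abs]; exact hlt a b)).tendsto_sum_nat).const_mul _
    exact ht.congr fun N => (hS N i j).symm
  have hGPC : G = P * C * Pᵀ := by
    ext i j
    rw [hGij, Finset.sum_comm, Matrix.mul_apply]
    refine Finset.sum_congr rfl fun b _ => ?_
    rw [Matrix.mul_apply, Finset.sum_mul]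
    refine Finset.sum_congr rfl fun a _ => ?_
    simp only [Matrix.transpose_apply, hC, Matrix.of_apply]
    ring
  have hCdiag : C = Matrix.diagonal q * K * Matrix.diagonal q := by
    ext a b
    rw [Matrix.mul_diagonal, Matrix.diagonal_mul]
    simp only [hC, hK, Matrix.of_apply]
  have hqdef : ∀ i, (∑ k : Fin n, P⁻¹ i k * B k 0) = q i := fun i => (Matrix.mul_apply).symm
  have hKdet := cauchy_det n l l hne
  -- determinant computation
  rw [hGPC, Matrix.det_mul, Matrix.det_mul, Matrix.det_transpose, hCdiag,
    Matrix.det_mul, Matrix.det_mul, Matrix.det_diagonal, hKdet]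
  -- algebraic cleanup
  set N2 : ℝ := ∏ i : Fin n, ∏ j ∈ Finset.Ioi i, (l j - l i) ^ 2 with hN2
  set DI : ℝ := ∏ i : Fin n, ∏ j ∈ Finset.Ioi i, ((1:ℝ) - l i * l j) ^ 2 with hDI
  set Dd : ℝ := ∏ i : Fin n, ((1:ℝ) - l i * l i) with hDd
  set Qp : ℝ := ∏ i : Fin n, q i with hQp
  have ha : (∏ i : Fin n, ∏ j ∈ Finset.Ioi i, ((l j - l i) * (l j - l i))) = N2 :=
    Finset.prod_congr rfl fun i _ => Finset.prod_congr rfl fun j _ => (sq _).symm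
  have hb : (∏ i : Fin n, ∏ j : Fin n, ((1:ℝ) - l i * l j)) = Dd * DI := by
    rw [Finset.prod_congr rfl fun i (_ : i ∈ Finset.univ) =>
      Fintype.prod_eq_mul_prod_compl i (fun j => (1:ℝ) - l i * l j),
      Finset.prod_mul_distrib]
    congr 1
    have hoff := Finset.prod_prod_Ioi_mul_eq_prod_prod_off_diag
      (f := fun a b => (1:ℝ) - l b * l a)
    have h2 : (∏ i : Fin n, ∏ j ∈ Finset.Ioi i, (((1:ℝ) - l i * l j) * ((1:ℝ) - l j * l i)))
        = DI :=
      Finset.prod_congr rfl fun i _ => Finset.prod_congr rfl fun j _ => by rw [sq]; ring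
    convert hoff.symm.trans h2 using 3 with i _
  have hc : (∏ i : Fin n, ∏ j ∈ Finset.Ioi i, ((l j - l i) / ((1:ℝ) - l i * l j)) ^ 2)
      = N2 / DI := by
    rw [hN2, hDI, ← Finset.prod_div_distrib]
    refine Finset.prod_congr rfl fun i _ => ?_
    rw [← Finset.prod_div_distrib]
    exact Finset.prod_congr rfl fun j _ => div_pow _ _ _
  have hd : (∏ i : Fin n, (∑ k : Fin n, P⁻¹ i k * B k 0) ^ 2 / ((1:ℝ) - l i ^ 2))
      = Qp ^ 2 / Dd := by
    rw [hQp, hDd, ← Finset.prod_pow, ← Finset.prod_div_distrib]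
    refine Finset.prod_congr rfl fun i _ => ?_
    rw [hqdef i, sq (l i)]
  rw [ha, hb, hc, hd]
  have hDdne : Dd ≠ 0 := Finset.prod_ne_zero_iff.2 fun i _ => hne i i
  have hDIne : DI ≠ 0 := Finset.prod_ne_zero_iff.2 fun i _ =>
    Finset.prod_ne_zero_iff.2 fun j _ => pow_ne_zero _ (hne i j)
  field_simp
end

section
/- Let λ₁,…,λₙ ∈ (-1,1) be pairwise distinct and b₁,…,bₙ nonzero reals. Then the infinite-horizon controllability Grammian G_∞ with entries bᵢbⱼ/(1-λᵢλⱼ) is symmetric positive definite, so the controllability ellipsoid E_∞ = {G_∞^{1/2} z : ‖z‖₂ ≤ 1} is a nondegenerate ellipsoid in ℝⁿ. -/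
theorem stmt_15 (n : ℕ) (l b : Fin n → ℝ) (hl : ∀ i, l i ∈ Set.Ioo (-1 : ℝ) 1)
    (hinj : Function.Injective l) (hb : ∀ i, b i ≠ 0) :
    (Matrix.of fun i j : Fin n => b i * b j / (1 - l i * l j)).PosDef ∧
      0 < Matrix.det (Matrix.of fun i j : Fin n => b i * b j / (1 - l i * l j)) := by
  have habs : ∀ i, |l i| < 1 := fun i => abs_lt.2 ⟨(hl i).1, (hl i).2⟩
  have hlt : ∀ i j, ‖l i * l j‖ < 1 := by
    intro i j
    rw [Real.norm_eq_abs, abs_mul]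
    calc |l i| * |l j| ≤ |l i| * 1 := by
          exact mul_le_mul_of_nonneg_left (habs j).le (abs_nonneg _)
      _ < 1 := by simpa using habs i
  have hpd : (Matrix.of fun i j : Fin n => b i * b j / (1 - l i * l j)).PosDef := by
    refine Matrix.PosDef.of_dotProduct_mulVec_pos ?_ ?_
    · ext i j
      simp [Matrix.conjTranspose, mul_comm (b j) (b i), mul_comm (l j) (l i)]
    · intro x hx
      set c : Fin n → ℝ := fun i => x i * b i with hc
      have hsum : ∀ i j : Fin n,
          Summable (fun k : ℕ => (c i * l i ^ k) * (c j * l j ^ k)) := by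
        intro i j
        have : Summable (fun k : ℕ => (l i * l j) ^ k) :=
          summable_geometric_of_norm_lt_one (hlt i j)
        have := this.mul_left (c i * c j)
        refine this.congr fun k => by rw [mul_pow]; ring
      have hterm : ∀ i j : Fin n, x i * (b i * b j / (1 - l i * l j) * x j)
          = ∑' k : ℕ, (c i * l i ^ k) * (c j * l j ^ k) := by
        intro i j
        have hg : ∑' k : ℕ, (l i * l j) ^ k = (1 - l i * l j)⁻¹ :=
          tsum_geometric_of_norm_lt_one (hlt i j)
        calc x i * (b i * b j / (1 - l i * l j) * x j)
            = (c i * c j) * (1 - l i * l j)⁻¹ := by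
              simp [hc, div_eq_mul_inv]; ring
          _ = (c i * c j) * ∑' k : ℕ, (l i * l j) ^ k := by rw [hg]
          _ = ∑' k : ℕ, (c i * c j) * (l i * l j) ^ k := (tsum_mul_left).symm
          _ = ∑' k : ℕ, (c i * l i ^ k) * (c j * l j ^ k) := by
              refine tsum_congr fun k => ?_
              rw [mul_pow]; ring
      have key : dotProduct (star x) ((Matrix.of fun i j : Fin n =>
          b i * b j / (1 - l i * l j)).mulVec x)
          = ∑' k : ℕ, (∑ i, c i * l i ^ k) ^ 2 := by
        have hstar : (star x : Fin n → ℝ) = x := rfl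
        rw [dotProduct, hstar]
        simp only [Matrix.mulVec, dotProduct, Matrix.of_apply, Finset.mul_sum]
        calc (∑ i, ∑ j, x i * (b i * b j / (1 - l i * l j) * x j))
            = ∑ i, ∑ j, ∑' k : ℕ, (c i * l i ^ k) * (c j * l j ^ k) := by
              exact Finset.sum_congr rfl fun i _ => Finset.sum_congr rfl fun j _ => hterm i j
          _ = ∑ i, ∑' k : ℕ, ∑ j, (c i * l i ^ k) * (c j * l j ^ k) := by
              exact Finset.sum_congr rfl fun i _ => (Summable.tsum_finsetSum fun j _ => hsum i j).symm
          _ = ∑' k : ℕ, ∑ i, ∑ j, (c i * l i ^ k) * (c j * l j ^ k) := by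
              exact (Summable.tsum_finsetSum fun i _ => summable_sum fun j _ => hsum i j).symm
          _ = ∑' k : ℕ, (∑ i, c i * l i ^ k) ^ 2 := by
              refine tsum_congr fun k => ?_
              rw [sq, Finset.sum_mul_sum]
      rw [key]
      obtain ⟨i0, hi0⟩ := Function.ne_iff.mp hx
      have hc0 : c ≠ 0 := by
        intro h
        have := congrFun h i0
        simp only [hc, Pi.zero_apply, mul_eq_zero] at this
        exact hi0 (by simpa using this.resolve_right (hb i0))
      have hvdet : (Matrix.vandermonde l).transpose.det ≠ 0 := by
        rw [Matrix.det_transpose, Matrix.det_vandermonde]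
        refine Finset.prod_ne_zero_iff.2 fun i _ => Finset.prod_ne_zero_iff.2 fun j hj => ?_
        have hij : j ≠ i := (Finset.mem_Ioi.mp hj).ne'
        exact sub_ne_zero.2 fun h => hij (hinj h)
      have hk : ∃ k : Fin n, (∑ i, c i * l i ^ (k : ℕ)) ≠ 0 := by
        by_contra h
        push_neg at h
        apply hc0
        refine Matrix.eq_zero_of_mulVec_eq_zero hvdet ?_
        funext k
        simpa [Matrix.mulVec, dotProduct, Matrix.vandermonde, Matrix.transpose_apply,
          mul_comm] using h k
      obtain ⟨k0, hk0⟩ := hk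
      have hgsum : Summable (fun k : ℕ => (∑ i, c i * l i ^ k) ^ 2) := by
        have hs : Summable (fun k : ℕ => ∑ i, ∑ j, (c i * l i ^ k) * (c j * l j ^ k)) :=
          summable_sum fun i _ => summable_sum fun j _ => hsum i j
        refine hs.congr fun k => ?_
        rw [sq, Finset.sum_mul_sum]
      exact Summable.tsum_pos hgsum (fun k => sq_nonneg _) (k0 : ℕ) (pow_two_pos_of_ne_zero hk0)
  exact ⟨hpd, hpd.det_pos⟩
end
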